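/- Let X_t and X_{t'} be jointly distributed finite random vectors with n components each. Assume the doubly-unique information Un^(k)(V_t;V_{t'}|X_t,X_{t'}) satisfies: (non-negativity) it is ≥ 0; (data-processing) Un^(k)(V_t;V_{t'}|X_t,X_{t'}) ≤ Un^(k)(X_t;X_{t'}|X_t,X_{t'}) for every supervenient pair (V_t generated from X_t, V_{t'} generated from X_{t'}, with V_t−X_t−X_{t'}−V_{t'} a Markov chain); and (the paper's Corollary B1) Un^(k)(X_t;X_{t'}|X_t,X_{t'}) = 𝒢^(k)(X_t;X_{t'}). Then the system possesses features that exhibit causal decoupling of order k if and only if 𝒢^(k)(X_t;X_{t'}) > 0. Moreover, assuming additionally the hypotheses of the downward-causation theorem (source data-processing inequality and self-unique identity for Un^(k), and Σ_{|α|=k} Syn^(k)(X_t;X_{t'}^α) ≥ 𝒟^(k)(X_t;X_{t'}) ≥ Syn^(k)(X_t;X_{t'}^β) for all |β| = k), if 𝒢^(k)(X_t;X_{t'}) > 0 and 𝒟^(k)(X_t;X_{t'}) = 0 then the system is perfectly decoupled. -/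
import Mathlib


/-!
Framework: finite probability.  A finite sample space `Ω` carries a probability
mass function `μ : Ω → ℝ`; random variables are functions on `Ω`.
-/

noncomputable section

open scoped BigOperators

attribute [local instance] Classical.propDecidable

variable {Ω : Type} [Fintype Ω]

/-- The probability that the random variable `f` takes the value `a`, under the pmf `μ`. -/
def prEq (μ : Ω → ℝ) {A : Type} (f : Ω → A) (a : A) : ℝ :=
  ∑ ω, if f ω = a then μ ω else 0

/-- `μ` is a probability mass function on the finite sample space `Ω`. -/
def IsPMF (μ : Ω → ℝ) : Prop :=
  (∀ ω, 0 ≤ μ ω) ∧ ∑ ω, μ ω = 1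

/-- The Markov chain `f − g − h`: `f` and `h` are conditionally independent given `g`. -/
def MarkovChain (μ : Ω → ℝ) {A B C : Type} (f : Ω → A) (g : Ω → B) (h : Ω → C) : Prop :=
  ∀ a b c,
    prEq μ (fun ω => (f ω, g ω, h ω)) (a, b, c) * prEq μ g b =
      prEq μ (fun ω => (f ω, g ω)) (a, b) * prEq μ (fun ω => (g ω, h ω)) (b, c)

/-- Statistical independence of two random variables. -/
def IndepRV (μ : Ω → ℝ) {A B : Type} (f : Ω → A) (g : Ω → B) : Prop :=
  ∀ a b, prEq μ (fun ω => (f ω, g ω)) (a, b) = prEq μ f a * prEq μ g b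

/-- Shannon mutual information `I(f;g)`. -/
def mutInfo (μ : Ω → ℝ) {A B : Type} (f : Ω → A) (g : Ω → B) : ℝ :=
  ∑ a ∈ Finset.univ.image f, ∑ b ∈ Finset.univ.image g,
    prEq μ (fun ω => (f ω, g ω)) (a, b) *
      Real.log (prEq μ (fun ω => (f ω, g ω)) (a, b) / (prEq μ f a * prEq μ g b))

/-- Conditional mutual information `I(f;g|h)`. -/
def condMutInfo (μ : Ω → ℝ) {A B C : Type} (f : Ω → A) (g : Ω → B) (h : Ω → C) : ℝ :=
  ∑ a ∈ Finset.univ.image f, ∑ b ∈ Finset.univ.image g, ∑ c ∈ Finset.univ.image h,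
    prEq μ (fun ω => (f ω, g ω, h ω)) (a, b, c) *
      Real.log ((prEq μ h c * prEq μ (fun ω => (f ω, g ω, h ω)) (a, b, c)) /
        (prEq μ (fun ω => (f ω, h ω)) (a, c) * prEq μ (fun ω => (g ω, h ω)) (b, c)))

/-- Conditional entropy `H(f|g)`. -/
def condEntropyRV (μ : Ω → ℝ) {A B : Type} (f : Ω → A) (g : Ω → B) : ℝ :=
  -∑ a ∈ Finset.univ.image f, ∑ b ∈ Finset.univ.image g,
    prEq μ (fun ω => (f ω, g ω)) (a, b) *
      Real.log (prEq μ (fun ω => (f ω, g ω)) (a, b) / prEq μ g b)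

/-- The sub-vector `X^α` of the random vector `X`, for a set of indices `α ⊆ [n]`. -/
def subvec {n : ℕ} {𝓧 : Fin n → Type} (X : Ω → ∀ i, 𝓧 i) (α : Finset (Fin n)) :
    Ω → ∀ i : α, 𝓧 i :=
  fun ω i => X ω i

/-- The collection of all subsets of `[n]` of cardinality `k`. -/
def kSets (n k : ℕ) : Finset (Finset (Fin n)) :=
  Finset.univ.filter fun α => α.card = k

/-- The Markov chain `f − g − h − i` of four variables:
`f ⟂ (h,i) | g` and `(f,g) ⟂ i | h`. -/
def FourChain {Ω : Type} [Fintype Ω] (μ : Ω → ℝ) {A B C D : Type}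
    (f : Ω → A) (g : Ω → B) (h : Ω → C) (i : Ω → D) : Prop :=
  MarkovChain μ f g (fun ω => (h ω, i ω)) ∧
    MarkovChain μ (fun ω => (f ω, g ω)) h i

section Helpers

lemma prEq_congr (μ : Ω → ℝ) {A B : Type} {F : Ω → A} {G : Ω → B} {a : A} {b : B}
    (h : ∀ ω, F ω = a ↔ G ω = b) : prEq μ F a = prEq μ G b :=
  Finset.sum_congr rfl fun ω _ => if_congr (h ω) rfl rfl

lemma prEq_zero (μ : Ω → ℝ) {A : Type} {F : Ω → A} {a : A}
    (h : ∀ ω, F ω ≠ a) : prEq μ F a = 0 :=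
  Finset.sum_eq_zero fun ω _ => if_neg (h ω)

lemma markov_self_left (μ : Ω → ℝ) {A C : Type} (f : Ω → A) (h : Ω → C) :
    MarkovChain μ f f h := by
  intro a b c
  by_cases hab : a = b
  · subst hab
    rw [prEq_congr μ (G := fun ω => (f ω, h ω)) (b := (a, c))
        (fun ω => by simp [Prod.ext_iff]),
      prEq_congr μ (F := fun ω => (f ω, f ω)) (G := f) (b := a)
        (fun ω => by simp [Prod.ext_iff])]
    ring
  · rw [prEq_zero μ (F := fun ω => (f ω, f ω, h ω)) (a := (a, b, c))
        (fun ω h' => hab ((congrArg Prod.fst h').symm.trans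
          (congrArg (fun p => p.2.1) h'))),
      prEq_zero μ (F := fun ω => (f ω, f ω)) (a := (a, b))
        (fun ω h' => hab ((congrArg Prod.fst h').symm.trans
          (congrArg Prod.snd h')))]
    ring

lemma markov_self_right (μ : Ω → ℝ) {A C : Type} (f : Ω → A) (g : Ω → C) :
    MarkovChain μ f g g := by
  intro a b c
  by_cases hbc : b = c
  · subst hbc
    rw [prEq_congr μ (F := fun ω => (f ω, g ω, g ω)) (G := fun ω => (f ω, g ω))
        (b := (a, b)) (fun ω => by simp [Prod.ext_iff]),
      prEq_congr μ (F := fun ω => (g ω, g ω)) (G := g) (b := b)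
        (fun ω => by simp [Prod.ext_iff])]
  · rw [prEq_zero μ (F := fun ω => (f ω, g ω, g ω)) (a := (a, b, c))
        (fun ω h' => hbc ((congrArg (fun p => p.2.1) h').symm.trans
          (congrArg (fun p => p.2.2) h'))),
      prEq_zero μ (F := fun ω => (g ω, g ω)) (a := (b, c))
        (fun ω h' => hbc ((congrArg Prod.fst h').symm.trans
          (congrArg Prod.snd h')))]
    ring

lemma prEq_comp_pair (μ : Ω → ℝ) {A C D : Type} [Fintype C]
    (F : Ω → A) (h : Ω → C) (ψ : C → D) (a : A) (d : D) :
    prEq μ (fun ω => (F ω, ψ (h ω))) (a, d) =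
      ∑ c ∈ Finset.univ.filter (fun c => ψ c = d),
        prEq μ (fun ω => (F ω, h ω)) (a, c) := by
  unfold prEq
  rw [Finset.sum_comm]
  refine Finset.sum_congr rfl fun ω _ => ?_
  beta_reduce
  rw [Finset.sum_filter]
  symm
  refine (Finset.sum_eq_single (h ω) ?_ ?_).trans ?_
  · intro c _ hc
    have hne : (F ω, h ω) ≠ (a, c) := fun h' => hc ((congrArg Prod.snd h').symm)
    simp [hne]
  · intro hmem; exact absurd (Finset.mem_univ _) hmem
  · by_cases h1 : ψ (h ω) = d <;> by_cases h2 : F ω = a <;>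
      simp [h1, h2, Prod.ext_iff]

lemma prEq_comp_triple (μ : Ω → ℝ) {A B C D : Type} [Fintype C]
    (f : Ω → A) (g : Ω → B) (h : Ω → C) (ψ : C → D) (a : A) (b : B) (d : D) :
    prEq μ (fun ω => (f ω, g ω, ψ (h ω))) (a, b, d) =
      ∑ c ∈ Finset.univ.filter (fun c => ψ c = d),
        prEq μ (fun ω => (f ω, g ω, h ω)) (a, b, c) := by
  unfold prEq
  rw [Finset.sum_comm]
  refine Finset.sum_congr rfl fun ω _ => ?_
  beta_reduce
  rw [Finset.sum_filter]
  symm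
  refine (Finset.sum_eq_single (h ω) ?_ ?_).trans ?_
  · intro c _ hc
    have hne : (f ω, g ω, h ω) ≠ (a, b, c) :=
      fun h' => hc ((congrArg (fun p => p.2.2) h').symm)
    simp [hne]
  · intro hmem; exact absurd (Finset.mem_univ _) hmem
  · by_cases h1 : ψ (h ω) = d <;> by_cases h2 : f ω = a <;>
      by_cases h3 : g ω = b <;> simp [h1, h2, h3, Prod.ext_iff]

lemma markov_comp_third (μ : Ω → ℝ) {A B C D : Type} [Fintype C]
    {f : Ω → A} {g : Ω → B} {h : Ω → C} (ψ : C → D)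
    (hm : MarkovChain μ f g h) : MarkovChain μ f g (fun ω => ψ (h ω)) := by
  intro a b d
  beta_reduce
  rw [prEq_comp_triple μ f g h ψ a b d, prEq_comp_pair μ g h ψ b d,
    Finset.sum_mul, Finset.mul_sum]
  exact Finset.sum_congr rfl fun c _ => hm a b c

lemma markov_pair_mid (μ : Ω → ℝ) {A B C : Type}
    {f : Ω → A} {g : Ω → B} {h : Ω → C}
    (hm : MarkovChain μ f g h) : MarkovChain μ f g (fun ω => (g ω, h ω)) := by
  rintro a b ⟨c1, c2⟩
  beta_reduce
  by_cases hc : c1 = b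
  · subst hc
    rw [prEq_congr μ (F := fun ω => (f ω, g ω, g ω, h ω)) (a := (a, c1, c1, c2))
        (G := fun ω => (f ω, g ω, h ω)) (b := (a, c1, c2))
        (fun ω => by simp [Prod.ext_iff]),
      prEq_congr μ (F := fun ω => (g ω, g ω, h ω)) (a := (c1, c1, c2))
        (G := fun ω => (g ω, h ω)) (b := (c1, c2))
        (fun ω => by simp [Prod.ext_iff])]
    exact hm a c1 c2
  · rw [prEq_zero μ (F := fun ω => (f ω, g ω, g ω, h ω)) (a := (a, b, c1, c2))
        (fun ω h' => hc ((congrArg (fun p => p.2.2.1) h').symm.trans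
          (congrArg (fun p => p.2.1) h'))),
      prEq_zero μ (F := fun ω => (g ω, g ω, h ω)) (a := (b, c1, c2))
        (fun ω h' => hc ((congrArg (fun p => p.2.1) h').symm.trans
          (congrArg Prod.fst h')))]
    ring

end Helpers

/-!
STATEMENT 3.  (i) The system possesses features that exhibit causal decoupling of order
`k` iff `𝒢⁽ᵏ⁾(X_t;X_{t'}) > 0`.  (ii) Under the additional hypotheses of the
downward-causation theorem, if `𝒢⁽ᵏ⁾ > 0` and `𝒟⁽ᵏ⁾ = 0` then the system is perfectly
decoupled (every causally emergent feature exhibits pure causal decoupling).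

Abstract quantities:  the doubly-unique information
`Un2 V f U g = Un⁽ᵏ⁾(f ; g | X_t, X_{t'})` for a supervenient pair `(f, g)` with
`f − X_t − X_{t'} − g` a Markov chain;  `Un V f T t = Un⁽ᵏ⁾(f ; t | X_t)`;
`Syn T t = Syn⁽ᵏ⁾(X_t ; t)`;  `G = 𝒢⁽ᵏ⁾(X_t;X_{t'})`;  `D = 𝒟⁽ᵏ⁾(X_t;X_{t'})`.
The hypothesis `hcorB1` is the paper's Corollary B1:
`Un⁽ᵏ⁾(X_t; X_{t'} | X_t, X_{t'}) = 𝒢⁽ᵏ⁾(X_t; X_{t'})`.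
-/
theorem causal_decoupling_iff_G_pos_and_perfect_decoupling
    {Ω : Type} [Fintype Ω] (μ : Ω → ℝ) (hμ : IsPMF μ)
    {n : ℕ} {𝓧 𝓨 : Fin n → Type} [∀ i, Fintype (𝓧 i)] [∀ i, Fintype (𝓨 i)]
    (X : Ω → ∀ i, 𝓧 i) (X' : Ω → ∀ i, 𝓨 i)
    (k : ℕ)
    (Un2 : (V : Type) → (Ω → V) → (U : Type) → (Ω → U) → ℝ)
    (Un : (V : Type) → (Ω → V) → (T : Type) → (Ω → T) → ℝ)
    (Syn : (T : Type) → (Ω → T) → ℝ)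
    (G D : ℝ)
    (hUn2_nonneg : ∀ (V : Type) (f : Ω → V) (U : Type) (g : Ω → U), 0 ≤ Un2 V f U g)
    (hUn2_dpi : ∀ (V U : Type) (f : Ω → V) (g : Ω → U),
      FourChain μ f X X' g → Un2 V f U g ≤ Un2 (∀ i, 𝓧 i) X (∀ i, 𝓨 i) X')
    (hcorB1 : Un2 (∀ i, 𝓧 i) X (∀ i, 𝓨 i) X' = G)
    (hUn_nonneg : ∀ (V : Type) (f : Ω → V) (T : Type) (t : Ω → T), 0 ≤ Un V f T t)
    (hUn_dpi : ∀ (W Z T : Type) (f : Ω → W) (g : Ω → Z) (t : Ω → T),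
      MarkovChain μ f g (fun ω => (X ω, t ω)) → Un W f T t ≤ Un Z g T t)
    (hself : ∀ (T : Type) (t : Ω → T), Un (∀ i, 𝓧 i) X T t = Syn T t)
    (hD_ub : D ≤ ∑ α ∈ kSets n k, Syn (∀ i : α, 𝓨 i) (subvec X' α))
    (hD_lb : ∀ β ∈ kSets n k, Syn (∀ i : β, 𝓨 i) (subvec X' β) ≤ D) :
    ((∃ (V U : Type) (_ : Fintype V) (_ : Fintype U) (f : Ω → V) (g : Ω → U),
        FourChain μ f X X' g ∧ 0 < Un2 V f U g) ↔ 0 < G) ∧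
    (0 < G → D = 0 →
      ∀ (V : Type) (_ : Fintype V) (f : Ω → V),
        MarkovChain μ f X X' → 0 < Un V f (∀ i, 𝓨 i) X' →
          (0 < Un V f (∀ i, 𝓨 i) X' ∧
            ∀ α ∈ kSets n k, Un V f (∀ i : α, 𝓨 i) (subvec X' α) = 0)) := by
  constructor
  · constructor
    · rintro ⟨V, U, _, _, f, g, hc, hpos⟩
      have := hUn2_dpi V U f g hc
      rw [hcorB1] at this
      linarith
    · intro hG
      refine ⟨(∀ i, 𝓧 i), (∀ i, 𝓨 i), inferInstance, inferInstance, X, X',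
        ⟨markov_self_left μ X _, markov_self_right μ _ X'⟩, ?_⟩
      rw [hcorB1]; exact hG
  · intro _ hD V _ f hm hpos
    refine ⟨hpos, fun α hα => ?_⟩
    have hm2 := markov_comp_third μ (fun (x : ∀ i, 𝓨 i) (i : α) => x i) hm
    have hm3 : MarkovChain μ f X
        (fun ω => (X ω, subvec X' α ω)) := markov_pair_mid μ hm2
    have h1 := hUn_dpi V (∀ i, 𝓧 i) (∀ i : α, 𝓨 i) f X (subvec X' α) hm3
    rw [hself] at h1
    have h2 := hD_lb α hα
    have h3 := hUn_nonneg V f (∀ i : α, 𝓨 i) (subvec X' α)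
    linarith
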